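/- Let A = {0, 1, ..., k−1}, r = (r_0,...,r_{k−1}) a k-tuple of positive integers, and h an integer with 2 ≤ h ≤ Σ r_j. Then |h^{(r)}A| = L(r,h), i.e., the lower bound L(r,h) for general h-fold sumsets is attained. -/

import Mathlib

open Finset

/-- A step `U → W`: some coordinate `j` decreases by 1 and coordinate `j+1` increases by 1. -/
def IsStep (k : ℕ) (U W : ℕ → ℕ) : Prop :=
  ∃ j, j + 1 < k ∧ U j = W j + 1 ∧ W (j + 1) = U (j + 1) + 1 ∧
    ∀ i, i ≠ j → i ≠ j + 1 → W i = U i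

/-- Membership in `R(r,h)`: a `k`-tuple of nonnegative integers with `x i ≤ r i` and `∑ x i = h`. -/
def InR (k : ℕ) (r : ℕ → ℕ) (h : ℕ) (x : ℕ → ℕ) : Prop :=
  (∀ i < k, x i ≤ r i) ∧ (∀ i, k ≤ i → x i = 0) ∧ ∑ i ∈ Finset.range k, x i = h

/-- The general `h`-fold sumset `h^{(r)}A` for `A = {a 0 < a 1 < ⋯ < a (k-1)}`. -/
def genSumset (k : ℕ) (a : ℕ → ℤ) (r : ℕ → ℕ) (h : ℕ) : Set ℤ :=
  {z | ∃ s : ℕ → ℕ, (∀ i < k, s i ≤ r i) ∧ (∑ i ∈ Finset.range k, s i = h) ∧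
    z = ∑ i ∈ Finset.range k, (s i : ℤ) * a i}

/-- The quantity `L(r,h)` in terms of `I`, `M`, `δ`, `θ`. -/
def Lval (k I M : ℕ) (r : ℕ → ℕ) (δ θ : ℕ) : ℤ :=
  (∑ j ∈ Finset.Ico (M + 1) k, (j : ℤ) * r j) - (∑ j ∈ Finset.range I, (j : ℤ) * r j)
    + (M : ℤ) * θ - (I : ℤ) * δ + 1

/-- The weighted sum `S(X) = ∑ j·x j`. -/
def Sw (k : ℕ) (x : ℕ → ℕ) : ℤ := ∑ j ∈ Finset.range k, (j : ℤ) * x j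

/-- An `(r,h)`-path of length `t`: `P 1 → P 2 → ⋯ → P t`, all in `R(r,h)`. -/
def IsPath (k : ℕ) (r : ℕ → ℕ) (h t : ℕ) (P : ℕ → ℕ → ℕ) : Prop :=
  (∀ i, 1 ≤ i → i ≤ t → InR k r h (P i)) ∧
  (∀ i, 1 ≤ i → i < t → IsStep k (P i) (P (i + 1)))

private lemma sum_split2 {β : Type*} [AddCommMonoid β] {k j : ℕ} (hj : j + 1 < k) (f : ℕ → β) :
    ∑ i ∈ Finset.range k, f i
      = ∑ i ∈ ((Finset.range k).erase j).erase (j + 1), f i + f (j + 1) + f j := by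
  have hjk : j ∈ Finset.range k := Finset.mem_range.mpr (by omega)
  have hj1 : j + 1 ∈ (Finset.range k).erase j :=
    Finset.mem_erase.mpr ⟨by omega, Finset.mem_range.mpr hj⟩
  rw [← Finset.sum_erase_add _ _ hjk, ← Finset.sum_erase_add _ _ hj1]

set_option maxHeartbeats 1000000 in
theorem general_hfold_lower_bound_attained (k h I M δ θ : ℕ) (r : ℕ → ℕ)
    (hr : ∀ j < k, 0 < r j)
    (hh2 : 2 ≤ h) (hhk : h ≤ ∑ j ∈ Finset.range k, r j)
    (hIk : I ≤ k)
    (hI1 : ∑ j ∈ Finset.range I, r j ≤ h)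
    (hI2 : ∀ I' ≤ k, (∑ j ∈ Finset.range I', r j ≤ h) → I' ≤ I)
    (hM1 : ∑ j ∈ Finset.Ico (M + 1) k, r j ≤ h)
    (hM2 : ∀ M', (∑ j ∈ Finset.Ico (M' + 1) k, r j ≤ h) → M ≤ M')
    (hδ : (δ : ℤ) = (h : ℤ) - ∑ j ∈ Finset.range I, (r j : ℤ))
    (hθ : (θ : ℤ) = (h : ℤ) - ∑ j ∈ Finset.Ico (M + 1) k, (r j : ℤ)) :
    ((genSumset k (fun i => (i : ℤ)) r h).ncard : ℤ) = Lval k I M r δ θ := by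
  classical
  have hk0 : 0 < k := by
    rcases Nat.eq_zero_or_pos k with h0 | h0
    · subst h0; simp at hhk; omega
    · exact h0
  have hMk : M < k := by
    have := hM2 (k - 1) (by rw [Nat.sub_add_cancel hk0]; simp)
    omega
  -- natural-number versions of the defining equations for δ and θ
  have hδnat : ∑ j ∈ Finset.range I, r j + δ = h := by
    have : ((∑ j ∈ Finset.range I, r j + δ : ℕ) : ℤ) = (h : ℤ) := by push_cast; linarith [hδ]
    exact_mod_cast this
  have hθnat : ∑ j ∈ Finset.Ico (M + 1) k, r j + θ = h := by
    have : ((∑ j ∈ Finset.Ico (M + 1) k, r j + θ : ℕ) : ℤ) = (h : ℤ) := by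
      push_cast; linarith [hθ]
    exact_mod_cast this
  have hδrI : I < k → δ ≤ r I := by
    intro hIlt
    by_contra hgt
    push_neg at hgt
    have hsum : ∑ j ∈ Finset.range (I + 1), r j ≤ h := by
      rw [Finset.sum_range_succ]; omega
    have := hI2 (I + 1) (by omega) hsum
    omega
  have hδk0 : I = k → δ = 0 := by
    intro hIe
    have := hδnat
    rw [hIe] at this
    omega
  have hθrM : θ ≤ r M := by
    rcases Nat.eq_zero_or_pos M with hM0 | hM0
    · subst hM0
      have hsplit : ∑ j ∈ Finset.range k, r j = r 0 + ∑ j ∈ Finset.Ico 1 k, r j := by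
        rw [Finset.range_eq_Ico, Finset.sum_eq_sum_Ico_succ_bot hk0]
      have h' := hθnat
      norm_num at h'
      omega
    · have hlt : h < ∑ j ∈ Finset.Ico M k, r j := by
        by_contra hle'
        push_neg at hle'
        have := hM2 (M - 1) (by rwa [Nat.sub_add_cancel hM0])
        omega
      have hsplit : ∑ j ∈ Finset.Ico M k, r j = r M + ∑ j ∈ Finset.Ico (M + 1) k, r j :=
        Finset.sum_eq_sum_Ico_succ_bot hMk _
      omega
  set mval : ℤ := (∑ j ∈ Finset.range I, (j : ℤ) * r j) + I * δ with hmval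
  set Mxval : ℤ := (∑ j ∈ Finset.Ico (M + 1) k, (j : ℤ) * r j) + M * θ with hMxval
  -- the minimal configuration
  have hmin : ∃ x, InR k r h x ∧ Sw k x = mval := by
    refine ⟨fun j => if j < I then r j else if j = I then δ else 0, ⟨?_, ?_, ?_⟩, ?_⟩
    · intro i hik
      show (if i < I then r i else if i = I then δ else 0) ≤ r i
      split_ifs with h1 h2
      · exact le_rfl
      · subst h2; exact hδrI hik
      · exact Nat.zero_le _
    · intro i hik
      show (if i < I then r i else if i = I then δ else 0) = 0
      rcases eq_or_lt_of_le hIk with hIe | hIlt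
      · rw [if_neg (by omega)]
        split_ifs with h2
        · exact hδk0 (by omega)
        · rfl
      · rw [if_neg (by omega), if_neg (by omega)]
    · rw [← Finset.sum_range_add_sum_Ico _ hIk]
      have h1 : ∑ i ∈ Finset.range I, (if i < I then r i else if i = I then δ else 0)
          = ∑ i ∈ Finset.range I, r i :=
        Finset.sum_congr rfl fun i hi => if_pos (Finset.mem_range.mp hi)
      have h2 : ∑ i ∈ Finset.Ico I k, (if i < I then r i else if i = I then δ else 0) = δ := by
        rcases eq_or_lt_of_le hIk with hIe | hIlt
        · rw [hIe]; simp [hδk0 hIe]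
        · rw [Finset.sum_eq_sum_Ico_succ_bot hIlt]
          have e1 : (if I < I then r I else if I = I then δ else 0) = δ := by simp
          have e2 : ∑ i ∈ Finset.Ico (I + 1) k,
              (if i < I then r i else if i = I then δ else 0) = 0 :=
            Finset.sum_eq_zero fun i hi => by
              obtain ⟨hi1, _⟩ := Finset.mem_Ico.mp hi
              rw [if_neg (by omega), if_neg (by omega)]
          rw [e1, e2]
          omega
      rw [h1, h2]; exact hδnat
    · rw [Sw, ← Finset.sum_range_add_sum_Ico _ hIk, hmval]
      have h1 : ∑ i ∈ Finset.range I,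
            (i : ℤ) * (if i < I then r i else if i = I then δ else 0)
          = ∑ i ∈ Finset.range I, (i : ℤ) * r i :=
        Finset.sum_congr rfl fun i hi => by rw [if_pos (Finset.mem_range.mp hi)]
      have h2 : ∑ i ∈ Finset.Ico I k,
            (i : ℤ) * (if i < I then r i else if i = I then δ else 0) = (I : ℤ) * δ := by
        rcases eq_or_lt_of_le hIk with hIe | hIlt
        · rw [hIe]; simp [hδk0 hIe]
        · rw [Finset.sum_eq_sum_Ico_succ_bot hIlt]
          have e1 : (if I < I then r I else if I = I then δ else 0) = δ := by simp
          have e2 : ∑ i ∈ Finset.Ico (I + 1) k,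
              (i : ℤ) * (if i < I then r i else if i = I then δ else 0) = 0 :=
            Finset.sum_eq_zero fun i hi => by
              obtain ⟨hi1, _⟩ := Finset.mem_Ico.mp hi
              rw [if_neg (by omega), if_neg (by omega)]; ring
          rw [e1, e2, add_zero]
      rw [h1, h2]
  -- the maximal configuration
  have hmax : ∃ x, InR k r h x ∧ Sw k x = Mxval := by
    refine ⟨fun j => if j < M then 0 else if j = M then θ else if j < k then r j else 0,
      ⟨?_, ?_, ?_⟩, ?_⟩
    · intro i hik
      show (if i < M then 0 else if i = M then θ else if i < k then r i else 0) ≤ r i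
      by_cases h1 : i < M
      · rw [if_pos h1]; exact Nat.zero_le _
      · rw [if_neg h1]
        by_cases h2 : i = M
        · rw [if_pos h2]; subst h2; exact hθrM
        · rw [if_neg h2, if_pos hik]
    · intro i hik
      show (if i < M then 0 else if i = M then θ else if i < k then r i else 0) = 0
      rw [if_neg (by omega), if_neg (by omega), if_neg (by omega)]
    · rw [← Finset.sum_range_add_sum_Ico _ (le_of_lt hMk)]
      have h1 : ∑ i ∈ Finset.range M,
          (if i < M then 0 else if i = M then θ else if i < k then r i else 0) = 0 :=
        Finset.sum_eq_zero fun i hi => if_pos (Finset.mem_range.mp hi)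
      have h2 : ∑ i ∈ Finset.Ico M k,
            (if i < M then 0 else if i = M then θ else if i < k then r i else 0)
          = θ + ∑ i ∈ Finset.Ico (M + 1) k, r i := by
        rw [Finset.sum_eq_sum_Ico_succ_bot hMk]
        have e1 : (if M < M then 0 else if M = M then θ else if M < k then r M else 0) = θ := by
          simp
        have e2 : ∑ i ∈ Finset.Ico (M + 1) k,
              (if i < M then 0 else if i = M then θ else if i < k then r i else 0)
            = ∑ i ∈ Finset.Ico (M + 1) k, r i :=
          Finset.sum_congr rfl fun i hi => by
            obtain ⟨hi1, hi2⟩ := Finset.mem_Ico.mp hi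
            rw [if_neg (by omega), if_neg (by omega), if_pos hi2]
        rw [e1, e2]
      rw [h1, h2]; omega
    · rw [Sw, ← Finset.sum_range_add_sum_Ico _ (le_of_lt hMk), hMxval]
      have h1 : ∑ i ∈ Finset.range M,
          (i : ℤ) * (if i < M then 0 else if i = M then θ else if i < k then r i else 0) = 0 :=
        Finset.sum_eq_zero fun i hi => by rw [if_pos (Finset.mem_range.mp hi)]; ring
      have h2 : ∑ i ∈ Finset.Ico M k,
            (i : ℤ) * (if i < M then 0 else if i = M then θ else if i < k then r i else 0)
          = (M : ℤ) * θ + ∑ i ∈ Finset.Ico (M + 1) k, (i : ℤ) * r i := by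
        rw [Finset.sum_eq_sum_Ico_succ_bot hMk]
        have e1 : (if M < M then 0 else if M = M then θ else if M < k then r M else 0) = θ := by
          simp
        have e2 : ∑ i ∈ Finset.Ico (M + 1) k,
              (i : ℤ) * (if i < M then 0 else if i = M then θ else if i < k then r i else 0)
            = ∑ i ∈ Finset.Ico (M + 1) k, (i : ℤ) * r i :=
          Finset.sum_congr rfl fun i hi => by
            obtain ⟨hi1, hi2⟩ := Finset.mem_Ico.mp hi
            rw [if_neg (by omega), if_neg (by omega), if_pos hi2]
        rw [e1, e2]
      rw [h1, h2]; ring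
  -- lower bound
  have hlb : ∀ x, InR k r h x → mval ≤ Sw k x := by
    rintro x ⟨hx1, hx2, hx3⟩
    have hnat : ∑ i ∈ Finset.range I, x i + ∑ i ∈ Finset.Ico I k, x i = h := by
      rw [Finset.sum_range_add_sum_Ico _ hIk]; exact hx3
    have hxsum : (∑ i ∈ Finset.range I, (x i : ℤ)) + ∑ i ∈ Finset.Ico I k, (x i : ℤ)
        = (h : ℤ) := by exact_mod_cast hnat
    have e1 : ∑ j ∈ Finset.range I, ((I : ℤ) * x j - I * r j + (j : ℤ) * r j)
        ≤ ∑ j ∈ Finset.range I, (j : ℤ) * x j :=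
      Finset.sum_le_sum fun j hj => by
        have hjI : j < I := Finset.mem_range.mp hj
        have hjI' : (j : ℤ) ≤ I := by exact_mod_cast le_of_lt hjI
        have hxr : (x j : ℤ) ≤ r j := by exact_mod_cast hx1 j (lt_of_lt_of_le hjI hIk)
        have hp : 0 ≤ ((I : ℤ) - j) * ((r j : ℤ) - x j) :=
          mul_nonneg (by linarith) (by linarith)
        nlinarith [hp]
    have e2 : ∑ j ∈ Finset.Ico I k, (I : ℤ) * x j ≤ ∑ j ∈ Finset.Ico I k, (j : ℤ) * x j :=
      Finset.sum_le_sum fun j hj => by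
        obtain ⟨hj1, _⟩ := Finset.mem_Ico.mp hj
        have : (I : ℤ) ≤ j := by exact_mod_cast hj1
        exact mul_le_mul_of_nonneg_right this (by positivity)
    have hsw : Sw k x = ∑ j ∈ Finset.range I, (j : ℤ) * x j
        + ∑ j ∈ Finset.Ico I k, (j : ℤ) * x j := by
      rw [Sw, Finset.sum_range_add_sum_Ico _ hIk]
    have e1' : ∑ j ∈ Finset.range I, ((I : ℤ) * x j - I * r j + (j : ℤ) * r j)
        = (I : ℤ) * (∑ j ∈ Finset.range I, (x j : ℤ))
          - I * (∑ j ∈ Finset.range I, (r j : ℤ)) + ∑ j ∈ Finset.range I, (j : ℤ) * r j := by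
      rw [Finset.sum_add_distrib, Finset.sum_sub_distrib, Finset.mul_sum, Finset.mul_sum]
    have e2' : ∑ j ∈ Finset.Ico I k, (I : ℤ) * x j
        = (I : ℤ) * ∑ j ∈ Finset.Ico I k, (x j : ℤ) := by rw [Finset.mul_sum]
    have hIδ : (I : ℤ) * δ = I * h - I * (∑ j ∈ Finset.range I, (r j : ℤ)) := by
      rw [hδ]; ring
    have hIh : (I : ℤ) * ((∑ i ∈ Finset.range I, (x i : ℤ))
        + ∑ i ∈ Finset.Ico I k, (x i : ℤ)) = I * h := by rw [hxsum]
    rw [hmval, hsw]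
    linarith [e1, e2, e1', e2', hIδ, hIh]
  -- upper bound
  have hub : ∀ x, InR k r h x → Sw k x ≤ Mxval := by
    rintro x ⟨hx1, hx2, hx3⟩
    have hMk1 : M + 1 ≤ k := hMk
    have hnat : ∑ i ∈ Finset.range (M + 1), x i + ∑ i ∈ Finset.Ico (M + 1) k, x i = h := by
      rw [Finset.sum_range_add_sum_Ico _ hMk1]; exact hx3
    have hxsum : (∑ i ∈ Finset.range (M + 1), (x i : ℤ))
        + ∑ i ∈ Finset.Ico (M + 1) k, (x i : ℤ) = (h : ℤ) := by exact_mod_cast hnat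
    have e1 : ∑ j ∈ Finset.range (M + 1), (j : ℤ) * x j
        ≤ ∑ j ∈ Finset.range (M + 1), (M : ℤ) * x j :=
      Finset.sum_le_sum fun j hj => by
        have : j ≤ M := by have := Finset.mem_range.mp hj; omega
        have : (j : ℤ) ≤ M := by exact_mod_cast this
        exact mul_le_mul_of_nonneg_right this (by positivity)
    have e2 : ∑ j ∈ Finset.Ico (M + 1) k, (j : ℤ) * x j
        ≤ ∑ j ∈ Finset.Ico (M + 1) k, ((j : ℤ) * r j - M * ((r j : ℤ) - x j)) :=
      Finset.sum_le_sum fun j hj => by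
        obtain ⟨hj1, hj2⟩ := Finset.mem_Ico.mp hj
        have hxr : (x j : ℤ) ≤ r j := by exact_mod_cast hx1 j hj2
        have hMj : (M : ℤ) ≤ j := by exact_mod_cast le_of_lt hj1
        have hp : 0 ≤ ((j : ℤ) - M) * ((r j : ℤ) - x j) :=
          mul_nonneg (by linarith) (by linarith)
        nlinarith [hp]
    have hsw : Sw k x = ∑ j ∈ Finset.range (M + 1), (j : ℤ) * x j
        + ∑ j ∈ Finset.Ico (M + 1) k, (j : ℤ) * x j := by
      rw [Sw, Finset.sum_range_add_sum_Ico _ hMk1]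
    have e1' : ∑ j ∈ Finset.range (M + 1), (M : ℤ) * x j
        = (M : ℤ) * ∑ j ∈ Finset.range (M + 1), (x j : ℤ) := by rw [Finset.mul_sum]
    have e2' : ∑ j ∈ Finset.Ico (M + 1) k, ((j : ℤ) * r j - M * ((r j : ℤ) - x j))
        = (∑ j ∈ Finset.Ico (M + 1) k, (j : ℤ) * r j)
          - M * ((∑ j ∈ Finset.Ico (M + 1) k, (r j : ℤ))
            - ∑ j ∈ Finset.Ico (M + 1) k, (x j : ℤ)) := by
      rw [Finset.sum_sub_distrib]
      congr 1
      rw [mul_sub, Finset.mul_sum, Finset.mul_sum, ← Finset.sum_sub_distrib]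
      exact Finset.sum_congr rfl fun j _ => by ring
    have hMθ : (M : ℤ) * θ = M * h - M * (∑ j ∈ Finset.Ico (M + 1) k, (r j : ℤ)) := by
      rw [hθ]; ring
    have hMh : (M : ℤ) * ((∑ i ∈ Finset.range (M + 1), (x i : ℤ))
        + ∑ i ∈ Finset.Ico (M + 1) k, (x i : ℤ)) = M * h := by rw [hxsum]
    rw [hMxval, hsw]
    linarith [e1, e2, e1', e2', hMθ, hMh]
  -- step lemma
  have hstep : ∀ x, InR k r h x → Sw k x < Mxval →
      ∃ x', InR k r h x' ∧ Sw k x' = Sw k x + 1 := by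
    rintro x ⟨hx1, hx2, hx3⟩ hlt
    have hj : ∃ j, j + 1 < k ∧ 1 ≤ x j ∧ x (j + 1) < r (j + 1) := by
      by_contra hno
      push_neg at hno
      have hex : ∃ j, x j ≠ 0 := by
        by_contra hall0
        push_neg at hall0
        have : ∑ i ∈ Finset.range k, x i = 0 := Finset.sum_eq_zero fun i _ => hall0 i
        omega
      have hxj0 : x (Nat.find hex) ≠ 0 := Nat.find_spec hex
      set j0 := Nat.find hex with hj0def
      have hzero : ∀ j < j0, x j = 0 := fun j hjlt => by
        have := Nat.find_min hex hjlt
        simpa using this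
      have hj0k : j0 < k := by
        by_contra hge
        push_neg at hge
        exact hxj0 (hx2 _ hge)
      have hfill : ∀ i, j0 + 1 ≤ i → i < k → x i = r i := by
        intro i hi
        induction i, hi using Nat.le_induction with
        | base =>
          intro hik
          have h1 := hno j0 hik (by omega)
          have h2 := hx1 (j0 + 1) hik
          omega
        | succ n hn ih =>
          intro hik
          have hxn : x n = r n := ih (by omega)
          have hrn : 0 < r n := hr n (by omega)
          have h1 := hno n hik (by omega)
          have h2 := hx1 (n + 1) hik
          omega
      have hsumsplit : x j0 + ∑ i ∈ Finset.Ico (j0 + 1) k, r i = h := by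
        have h1 : ∑ i ∈ Finset.range j0, x i + ∑ i ∈ Finset.Ico j0 k, x i
            = ∑ i ∈ Finset.range k, x i := Finset.sum_range_add_sum_Ico _ (le_of_lt hj0k)
        have h2 : ∑ i ∈ Finset.range j0, x i = 0 :=
          Finset.sum_eq_zero fun i hi => hzero i (Finset.mem_range.mp hi)
        have h3 : ∑ i ∈ Finset.Ico j0 k, x i = x j0 + ∑ i ∈ Finset.Ico (j0 + 1) k, x i :=
          Finset.sum_eq_sum_Ico_succ_bot hj0k _
        have h4 : ∑ i ∈ Finset.Ico (j0 + 1) k, x i = ∑ i ∈ Finset.Ico (j0 + 1) k, r i :=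
          Finset.sum_congr rfl fun i hi => by
            obtain ⟨hi1, hi2⟩ := Finset.mem_Ico.mp hi
            exact hfill i hi1 hi2
        omega
      have hMj0 : M ≤ j0 := hM2 j0 (by omega)
      have hswx : Sw k x = (j0 : ℤ) * x j0 + ∑ i ∈ Finset.Ico (j0 + 1) k, (i : ℤ) * r i := by
        rw [Sw, ← Finset.sum_range_add_sum_Ico _ (le_of_lt hj0k),
          Finset.sum_eq_sum_Ico_succ_bot hj0k]
        have hz : ∑ i ∈ Finset.range j0, (i : ℤ) * x i = 0 :=
          Finset.sum_eq_zero fun i hi => by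
            rw [hzero i (Finset.mem_range.mp hi)]; ring
        have hc : ∑ i ∈ Finset.Ico (j0 + 1) k, (i : ℤ) * x i
            = ∑ i ∈ Finset.Ico (j0 + 1) k, (i : ℤ) * r i :=
          Finset.sum_congr rfl fun i hi => by
            obtain ⟨hi1, hi2⟩ := Finset.mem_Ico.mp hi
            rw [hfill i hi1 hi2]
        rw [hz, hc, zero_add]
      have hMxsplit : Mxval = ∑ i ∈ Finset.Ico (M + 1) (j0 + 1), (i : ℤ) * r i
          + ∑ i ∈ Finset.Ico (j0 + 1) k, (i : ℤ) * r i + M * θ := by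
        rw [hMxval, ← Finset.sum_Ico_consecutive (fun i => (i : ℤ) * r i)
          (show M + 1 ≤ j0 + 1 by omega) (show j0 + 1 ≤ k by omega)]
      have hrsplit : ∑ i ∈ Finset.Ico (M + 1) (j0 + 1), (r i : ℤ)
          + ∑ i ∈ Finset.Ico (j0 + 1) k, (r i : ℤ)
          = ∑ i ∈ Finset.Ico (M + 1) k, (r i : ℤ) :=
        Finset.sum_Ico_consecutive _ (by omega) (by omega)
      have hsumZ : (x j0 : ℤ) + ∑ i ∈ Finset.Ico (j0 + 1) k, (r i : ℤ) = h := by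
        exact_mod_cast hsumsplit
      have hxval : (x j0 : ℤ) = θ + ∑ i ∈ Finset.Ico (M + 1) (j0 + 1), (r i : ℤ) := by
        linarith [hθ, hrsplit, hsumZ]
      have hbound : ∑ i ∈ Finset.Ico (M + 1) (j0 + 1), (i : ℤ) * r i
          ≤ ∑ i ∈ Finset.Ico (M + 1) (j0 + 1), (j0 : ℤ) * r i :=
        Finset.sum_le_sum fun i hi => by
          obtain ⟨_, hi2⟩ := Finset.mem_Ico.mp hi
          have : (i : ℤ) ≤ j0 := by exact_mod_cast Nat.lt_succ_iff.mp hi2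
          exact mul_le_mul_of_nonneg_right this (by positivity)
      have hMθ : (M : ℤ) * θ ≤ (j0 : ℤ) * θ :=
        mul_le_mul_of_nonneg_right (by exact_mod_cast hMj0) (by positivity)
      have hsum' : ∑ i ∈ Finset.Ico (M + 1) (j0 + 1), (j0 : ℤ) * r i
          = (j0 : ℤ) * ∑ i ∈ Finset.Ico (M + 1) (j0 + 1), (r i : ℤ) := by
        rw [Finset.mul_sum]
      have hxprod : (j0 : ℤ) * (x j0 : ℤ)
          = j0 * θ + j0 * ∑ i ∈ Finset.Ico (M + 1) (j0 + 1), (r i : ℤ) := by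
        rw [hxval]; ring
      rw [hswx, hMxsplit] at hlt
      linarith [hbound, hMθ, hsum', hxprod]
    obtain ⟨j, hjk, hxj, hxj1⟩ := hj
    set x' : ℕ → ℕ := fun i => if i = j then x j - 1 else if i = j + 1 then x (j + 1) + 1 else x i
      with hx'def
    have hx'j : x' j = x j - 1 := by simp [hx'def]
    have hx'j1 : x' (j + 1) = x (j + 1) + 1 := by
      rw [hx'def]
      have hne : ¬ (j + 1 = j) := by omega
      simp [hne]
    have hx'other : ∀ i, i ≠ j → i ≠ j + 1 → x' i = x i := by
      intro i h1 h2
      rw [hx'def]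
      simp only [if_neg h1, if_neg h2]
    refine ⟨x', ⟨?_, ?_, ?_⟩, ?_⟩
    · intro i hik
      by_cases h1 : i = j
      · subst h1; rw [hx'j]; have := hx1 i hik; omega
      by_cases h2 : i = j + 1
      · subst h2; rw [hx'j1]; omega
      · rw [hx'other i h1 h2]; exact hx1 i hik
    · intro i hik
      rw [hx'other i (by omega) (by omega)]
      exact hx2 i hik
    · rw [sum_split2 hjk]
      have hs : ∑ i ∈ ((Finset.range k).erase j).erase (j + 1), x' i
          = ∑ i ∈ ((Finset.range k).erase j).erase (j + 1), x i :=
        Finset.sum_congr rfl fun i hi => by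
          obtain ⟨hi1, hi2, _⟩ := Finset.mem_erase.mp hi |>.imp id (fun q => Finset.mem_erase.mp q)
          exact hx'other i hi2 hi1
      have hx3' : ∑ i ∈ ((Finset.range k).erase j).erase (j + 1), x i + x (j + 1) + x j = h := by
        rw [← sum_split2 hjk]; exact hx3
      rw [hs, hx'j, hx'j1]
      omega
    · rw [Sw, Sw, sum_split2 hjk (fun i => (i : ℤ) * x' i),
        sum_split2 hjk (fun i => (i : ℤ) * x i)]
      have hs : ∑ i ∈ ((Finset.range k).erase j).erase (j + 1), (i : ℤ) * x' i
          = ∑ i ∈ ((Finset.range k).erase j).erase (j + 1), (i : ℤ) * x i :=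
        Finset.sum_congr rfl fun i hi => by
          obtain ⟨hi1, hi2, _⟩ := Finset.mem_erase.mp hi |>.imp id (fun q => Finset.mem_erase.mp q)
          rw [hx'other i hi2 hi1]
      have hc1 : ((x j - 1 : ℕ) : ℤ) = (x j : ℤ) - 1 := by omega
      rw [hs, hx'j, hx'j1, hc1]
      push_cast
      ring
  -- fill the whole interval
  have hall : ∀ n : ℕ, mval + n ≤ Mxval → ∃ x, InR k r h x ∧ Sw k x = mval + n := by
    intro n
    induction n with
    | zero =>
      intro _
      obtain ⟨x, hxR, hxS⟩ := hmin
      exact ⟨x, hxR, by rw [hxS]; simp⟩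
    | succ n ih =>
      intro hle
      obtain ⟨x, hxR, hxS⟩ := ih (by push_cast at hle ⊢; linarith)
      obtain ⟨x', hx'R, hx'S⟩ := hstep x hxR (by rw [hxS]; push_cast at hle ⊢; linarith)
      exact ⟨x', hx'R, by rw [hx'S, hxS]; push_cast; ring⟩
  -- set equality
  have hset : genSumset k (fun i => (i : ℤ)) r h = Set.Icc mval Mxval := by
    ext z
    simp only [genSumset, Set.mem_setOf_eq, Set.mem_Icc]
    constructor
    · rintro ⟨s, hs1, hs2, rfl⟩
      have hR : InR k r h (fun i => if i < k then s i else 0) := by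
        refine ⟨fun i hi => ?_, fun i hi => ?_, ?_⟩
        · show (if i < k then s i else 0) ≤ r i
          rw [if_pos hi]; exact hs1 i hi
        · show (if i < k then s i else 0) = 0
          rw [if_neg (by omega)]
        · rw [← hs2]
          exact Finset.sum_congr rfl fun i hi => if_pos (Finset.mem_range.mp hi)
      have hz : Sw k (fun i => if i < k then s i else 0)
          = ∑ i ∈ Finset.range k, (s i : ℤ) * i := by
        rw [Sw]
        exact Finset.sum_congr rfl fun i hi => by
          rw [if_pos (Finset.mem_range.mp hi)]; ring
      exact ⟨le_of_le_of_eq (hlb _ hR) hz, le_of_eq_of_le hz.symm (hub _ hR)⟩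
    · rintro ⟨hz1, hz2⟩
      obtain ⟨x, hxR, hxS⟩ := hall (z - mval).toNat
        (by rw [Int.toNat_of_nonneg (by linarith)]; linarith)
      refine ⟨x, hxR.1, hxR.2.2, ?_⟩
      have hzz : Sw k x = z := by
        rw [hxS, Int.toNat_of_nonneg (by linarith)]; ring
      show z = ∑ i ∈ Finset.range k, (x i : ℤ) * i
      rw [← hzz, Sw]
      exact Finset.sum_congr rfl fun i _ => mul_comm _ _
  -- final computation
  have hmM : mval ≤ Mxval := by
    obtain ⟨x, hxR, hxS⟩ := hmin
    rw [← hxS]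
    exact hub x hxR
  rw [hset, ← Finset.coe_Icc, Set.ncard_coe_finset, Int.card_Icc]
  rw [Int.toNat_of_nonneg (by linarith)]
  simp only [Lval]
  rw [hmval, hMxval]
  ring
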